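/- arXiv:2111.06245 — 3 statements merged into one kernel-verified Lean document; each statement's English description precedes it below -/
import Mathlib

section
/- Let l ≥ 1 and let q(Y) = y₁² − y₂² − ⋯ − y_l² be the quadratic form of signature (1, l−1) on ℝ^l. Let h(Y) be the l×l real symmetric matrix whose (i,j) entry is (ε_i ε_j y_i y_j)/q(Y)² + ε_i δ_{ij}/(2q(Y)), where ε₁ = −1 and ε_i = 1 for i ≥ 2. Then for Y with q(Y) ≠ 0, the matrix h(Y) is invertible with inverse given by the matrix whose (i,j) entry is 4·y_i·y_j + 2·q(Y)·ε_i·δ_{ij}, and det h(Y) = 1/(2^l · q(Y)^l). -/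
open Matrix

/-- The hermitian metric matrix `h(Y)` of the Kähler form on the orthogonal tube domain,
for the quadratic form `q(Y) = y₁² - y₂² - ⋯ - y_l²`: with `ε₁ = -1`, `ε_i = 1` for
`i ≥ 2`, and `h(Y)_{ij} = ε_i ε_j y_i y_j / q(Y)² + ε_i δ_{ij} / (2 q(Y))`, the inverse
of `h(Y)` is the matrix with entries `4 y_i y_j + 2 q(Y) ε_i δ_{ij}`, and
`det h(Y) = 1 / (2^l q(Y)^l)`. -/
theorem stmt_8 (l : ℕ) (hl : 1 ≤ l) (Y : Fin l → ℝ)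
    (ε : Fin l → ℝ) (hε : ∀ i : Fin l, ε i = if i.val = 0 then -1 else 1)
    (q : ℝ) (hq : q = -∑ i : Fin l, ε i * Y i ^ 2) (hq0 : q ≠ 0)
    (h hinv : Matrix (Fin l) (Fin l) ℝ)
    (hh : ∀ i j : Fin l,
      h i j = ε i * ε j * Y i * Y j / q ^ 2 + (if i = j then ε i / (2 * q) else 0))
    (hhinv : ∀ i j : Fin l,
      hinv i j = 4 * Y i * Y j + (if i = j then 2 * q * ε i else 0)) :
    h * hinv = 1 ∧ hinv * h = 1 ∧ h.det = 1 / (2 ^ l * q ^ l) := by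
  have hε1 : ∀ i, ε i = 1 ∨ ε i = -1 := by
    intro i; rw [hε]; split
    · right; rfl
    · left; rfl
  have hsum : ∑ k : Fin l, ε k * Y k ^ 2 = -q := by rw [hq]; ring
  have hmul : h * hinv = 1 := by
    ext i j
    rw [Matrix.mul_apply]
    have expand : ∀ k : Fin l, h i k * hinv k j =
        (4 * ε i * Y i * Y j / q ^ 2) * (ε k * Y k ^ 2)
        + (if k = j then ε i * ε k * Y i * Y k / q ^ 2 * (2 * q * ε k) else 0)
        + (if i = k then ε i / (2 * q) * (4 * Y k * Y j) else 0)
        + (if i = k then (if k = j then ε i / (2 * q) * (2 * q * ε k) else 0) else 0) := by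
      intro k
      rw [hh, hhinv]
      split <;> split <;> ring
    rw [Finset.sum_congr rfl fun k _ => expand k]
    rw [Finset.sum_add_distrib, Finset.sum_add_distrib, Finset.sum_add_distrib,
      ← Finset.mul_sum, hsum]
    simp only [Finset.sum_ite_eq, Finset.sum_ite_eq', Finset.mem_univ, if_true]
    by_cases hij : i = j
    · subst hij
      simp only [if_pos rfl, Matrix.one_apply_eq]
      rcases hε1 i with h1 | h1 <;> rw [h1] <;> field_simp <;> simp only [if_true, mul_one] <;> ring
    · rw [Matrix.one_apply_ne hij]
      simp only [if_neg hij]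
      rcases hε1 i with h1 | h1 <;> rcases hε1 j with h2 | h2 <;>
        rw [h1, h2] <;> field_simp <;> ring
  refine ⟨hmul, mul_eq_one_comm.mp hmul, ?_⟩
  -- determinant of hinv
  haveI : NeZero l := ⟨by omega⟩
  have hdetinv : hinv.det = (2 * q) ^ l := by
    have hrw : hinv = Matrix.diagonal (fun i => 2 * q * ε i) *
        (1 + Matrix.replicateCol Unit (fun i => 2 * ε i * Y i / q) * Matrix.replicateRow Unit Y) := by
      ext i j
      rw [Matrix.mul_apply]
      simp only [Matrix.add_apply, Matrix.mul_apply, Matrix.replicateCol_apply, Matrix.replicateRow_apply,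
        Matrix.diagonal_apply, Matrix.one_apply, Finset.univ_unique, Finset.sum_singleton]
      rw [hhinv]
      by_cases hij : i = j
      · subst hij
        simp only [if_pos rfl]
        rw [Finset.sum_eq_single i (by intro b _ hb; simp [Ne.symm hb]) (by simp)]
        simp only [if_pos rfl]
        rcases hε1 i with h1 | h1 <;> rw [h1] <;> field_simp <;> simp only [if_true, mul_one] <;> ring
      · rw [if_neg hij]
        rw [Finset.sum_eq_single i (by intro b _ hb; simp [Ne.symm hb]) (by simp)]
        simp only [if_pos rfl, if_neg hij]
        rcases hε1 i with h1 | h1 <;> rw [h1] <;> field_simp <;> simp only [if_true, mul_one] <;> ring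
    rw [hrw, Matrix.det_mul, Matrix.det_diagonal, Matrix.det_one_add_replicateCol_mul_replicateRow]
    have hdot : (Y ⬝ᵥ fun i => 2 * ε i * Y i / q) = -2 := by
      simp only [dotProduct]
      have : ∀ k : Fin l, Y k * (2 * ε k * Y k / q) = (2 / q) * (ε k * Y k ^ 2) := by
        intro k; ring
      rw [Finset.sum_congr rfl fun k _ => this k, ← Finset.mul_sum, hsum]
      field_simp
    rw [hdot]
    have hprod : ∏ i : Fin l, (2 * q * ε i) = (2 * q) ^ l * (-1) := by
      rw [Finset.prod_congr rfl (fun i _ => by rw [hε i])]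
      have : ∀ i : Fin l, 2 * q * (if i.val = 0 then (-1:ℝ) else 1)
          = (2 * q) * (if i = 0 then (-1:ℝ) else 1) := by
        intro i
        congr 1
        simp only [Fin.val_eq_zero_iff]
      rw [Finset.prod_congr rfl (fun i _ => this i), Finset.prod_mul_distrib,
        Finset.prod_const, Finset.card_univ, Fintype.card_fin]
      congr 1
      rw [Finset.prod_ite_eq' Finset.univ (0 : Fin l) (fun _ => (-1:ℝ))]
      simp
    rw [hprod]; ring
  have hdet : h.det * hinv.det = 1 := by rw [← Matrix.det_mul, hmul, Matrix.det_one]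
  rw [hdetinv] at hdet
  have h2q : (2 * q) ^ l ≠ 0 := pow_ne_zero _ (by
    intro hc; apply hq0; linarith)
  field_simp at hdet ⊢
  rw [mul_pow] at hdet
  linarith
end

section
/- Let l ≥ 2 and consider the Siegel domain S_t ⊂ ℝ^l + i·C consisting of Z = X + iY with x₁² + x₂² + |q(X_D)| < t², 1/t < y₁, y₁² < t²·q(Y), and |q(Y_D)| < t²·y₁², where q(Y) = y₁y₂ + q(Y_D) and q(Y_D) = −y₃² − ⋯ − y_l². If real exponents p₁, p₂, p satisfy p₂ + p < l − 1 and p₁ + p₂ + 2p < l, then the integral ∫_{S_t} y₁^{p₁} · y₂^{p₂} · q(Y)^p · q(Y)^{−l} dX dY is finite. -/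
open MeasureTheory

/-- `q(Y_D) = -y₃² - ⋯ - y_l²` in the coordinates of the Siegel domain (`l = n + 2`). -/
def qD (n : ℕ) (Y : Fin (n + 2) → ℝ) : ℝ := -∑ i : Fin n, Y i.succ.succ ^ 2

/-- `q(Y) = y₁ y₂ + q(Y_D)`. -/
def qf (n : ℕ) (Y : Fin (n + 2) → ℝ) : ℝ := Y 0 * Y 1 + qD n Y

/-- The Siegel domain `S_t`: pairs `Z = X + iY` with
`x₁² + x₂² + |q(X_D)| < t²`, `1/t < y₁`, `y₁² < t² q(Y)` and `|q(Y_D)| < t² y₁²`. -/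
def SiegelDomain (n : ℕ) (t : ℝ) : Set ((Fin (n + 2) → ℝ) × (Fin (n + 2) → ℝ)) :=
  {p | (p.1 0) ^ 2 + (p.1 1) ^ 2 + |qD n p.1| < t ^ 2 ∧
       1 / t < p.2 0 ∧ (p.2 0) ^ 2 < t ^ 2 * qf n p.2 ∧ |qD n p.2| < t ^ 2 * (p.2 0) ^ 2}

section Aux

open Set

lemma qD_abs (n : ℕ) (Y : Fin (n + 2) → ℝ) :
    |qD n Y| = ∑ i : Fin n, (Y i.succ.succ) ^ 2 := by
  unfold qD
  rw [abs_neg, abs_of_nonneg (Finset.sum_nonneg fun i _ => sq_nonneg _)]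

lemma isOpen_SiegelDomain (n : ℕ) (t : ℝ) : IsOpen (SiegelDomain n t) := by
  have hqDc : Continuous (qD n) := by
    unfold qD
    exact (continuous_finset_sum Finset.univ fun (i : Fin n) _ =>
      (continuous_apply i.succ.succ).pow 2).neg
  have hqfc : Continuous (qf n) := by
    unfold qf
    exact ((continuous_apply 0).mul (continuous_apply 1)).add hqDc
  unfold SiegelDomain
  simp only [setOf_and]
  refine IsOpen.inter ?_ (IsOpen.inter ?_ (IsOpen.inter ?_ ?_))
  · exact isOpen_lt (((((continuous_apply 0).comp continuous_fst).pow 2).add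
      (((continuous_apply 1).comp continuous_fst).pow 2)).add
      (hqDc.comp continuous_fst).abs) continuous_const
  · exact isOpen_lt continuous_const ((continuous_apply 0).comp continuous_snd)
  · exact isOpen_lt (((continuous_apply 0).comp continuous_snd).pow 2)
      (continuous_const.mul (hqfc.comp continuous_snd))
  · exact isOpen_lt ((hqDc.comp continuous_snd).abs)
      (continuous_const.mul (((continuous_apply 0).comp continuous_snd).pow 2))

/-- Choice of the auxiliary exponents `δ` and `ε`. -/
lemma exists_delta_eps (n : ℕ) (p₁ p₂ p : ℝ)
    (h1 : p₂ + p < (n : ℝ) + 2 - 1) (h2 : p₁ + p₂ + 2 * p < (n : ℝ) + 2) :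
    ∃ δ ε : ℝ, 0 ≤ δ ∧ 0 < ε ∧
      p₂ + (p - ((n:ℝ)+2)) + δ < -1 ∧
      p₁ + (p - ((n:ℝ)+2)) + -δ + (1+ε)*(n:ℝ) < -1 := by
  set a : ℝ := p₁ + (p - ((n:ℝ)+2)) with ha
  set b : ℝ := p₂ + (p - ((n:ℝ)+2)) with hb
  have hg : 0 < -2 - (a + b + (n:ℝ)) := by
    have hn : (0:ℝ) ≤ n := Nat.cast_nonneg n
    simp only [ha, hb]; linarith
  set g : ℝ := -2 - (a + b + (n:ℝ)) with hgdef
  have hb1 : b < -1 := by simp only [hb]; linarith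
  have hnε : (n:ℝ) * (g/(4*((n:ℝ)+1))) ≤ g/4 := by
    have hn : (0:ℝ) ≤ n := Nat.cast_nonneg n
    rw [show (n:ℝ) * (g/(4*((n:ℝ)+1))) = ((n:ℝ)*g)/(4*((n:ℝ)+1)) by ring,
      div_le_div_iff₀ (by positivity) (by norm_num : (0:ℝ) < 4)]
    nlinarith
  refine ⟨max 0 (-1 - b - g/4), g/(4*((n:ℝ)+1)), le_max_left _ _, by positivity, ?_, ?_⟩
  · rcases le_total (-1 - b - g/4) 0 with h | h
    · rw [max_eq_left h]; linarith
    · rw [max_eq_right h]; linarith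
  · have hexp : (1+g/(4*((n:ℝ)+1)))*(n:ℝ) = (n:ℝ) + (n:ℝ)*(g/(4*((n:ℝ)+1))) := by ring
    rcases le_total (-1 - b - g/4) 0 with h | h
    · rw [max_eq_left h]; rw [hexp]; linarith
    · rw [max_eq_right h]; rw [hexp]; linarith

/-- The main pointwise estimate. -/
lemma pointwise_est (n : ℕ) (t ε δ c₀ K₀ p₁ p₂ p : ℝ) (Y : Fin (n+2) → ℝ) (q : ℝ)
    (ht : 0 < t) (hy0 : 0 < Y 0) (hy1 : 0 < Y 1) (hq : 0 < q) (hqle : q ≤ Y 0 * Y 1)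
    (hc₀pos : 0 < c₀) (hc₀q : c₀ * (Y 0 * Y 1) ≤ q)
    (hK : K₀ = max 1 (c₀ ^ (p - ((n:ℝ)+2))))
    (hδ0 : 0 ≤ δ) (hε0 : 0 < ε) (h_ty0 : 1 < t * Y 0) (hy0lt : Y 0 < t^2 * Y 1)
    (hwi : ∀ i : Fin n, |Y i.succ.succ| < t * Y 0) :
    (Y 0)^p₁ * (Y 1)^p₂ * q^p * q^(-((n:ℝ)+2)) ≤
      (K₀*(t^2)^δ*((2*t)^(1+ε))^n) * (Y 0)^(p₁+(p-((n:ℝ)+2)) + -δ + (1+ε)*(n:ℝ)) *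
      ((Y 1)^(p₂+(p-((n:ℝ)+2))+δ) * ∏ i : Fin n, (1+|Y i.succ.succ|)^(-(1+ε))) := by
  have hK₀1 : 1 ≤ K₀ := hK ▸ le_max_left _ _
  have hqK : q^(p-((n:ℝ)+2)) ≤ K₀ * ((Y 0)^(p-((n:ℝ)+2)) * (Y 1)^(p-((n:ℝ)+2))) := by
    rw [← Real.mul_rpow hy0.le hy1.le]
    rcases le_or_gt 0 (p-((n:ℝ)+2)) with he | he
    · refine le_trans (Real.rpow_le_rpow hq.le hqle he) ?_
      exact le_mul_of_one_le_left (Real.rpow_nonneg (mul_pos hy0 hy1).le _) hK₀1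
    · refine le_trans (Real.rpow_le_rpow_of_nonpos (mul_pos hc₀pos (mul_pos hy0 hy1)) hc₀q he.le) ?_
      rw [Real.mul_rpow hc₀pos.le (mul_pos hy0 hy1).le]
      exact mul_le_mul_of_nonneg_right (hK ▸ le_max_right _ _)
        (Real.rpow_nonneg (mul_pos hy0 hy1).le _)
  have h3' : (1:ℝ) ≤ (t^2)^δ * (Y 1)^δ * (Y 0)^(-δ) := by
    have hbase : 1 ≤ t^2 * Y 1 / Y 0 := by
      rw [le_div_iff₀ hy0]; linarith
    calc (1:ℝ) ≤ (t^2 * Y 1 / Y 0)^δ := Real.one_le_rpow hbase hδ0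
      _ = (t^2)^δ * (Y 1)^δ * (Y 0)^(-δ) := by
          rw [Real.div_rpow (by positivity) hy0.le,
            Real.mul_rpow (by positivity) hy1.le, Real.rpow_neg hy0.le, div_eq_mul_inv]
  have hterm : ∀ i : Fin n, (1:ℝ) ≤ (2*t)^(1+ε) * (Y 0)^(1+ε) * (1+|Y i.succ.succ|)^(-(1+ε)) := by
    intro i
    have h1w : (0:ℝ) < 1 + |Y i.succ.succ| := by positivity
    have hle : 1 + |Y i.succ.succ| ≤ 2*t*(Y 0) := by
      have := hwi i; linarith
    have hpow : (1+|Y i.succ.succ|)^(1+ε) ≤ (2*t*(Y 0))^(1+ε) :=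
      Real.rpow_le_rpow h1w.le hle (by linarith)
    rw [show (2*t*(Y 0)) = (2*t)*(Y 0) by ring, Real.mul_rpow (by positivity) hy0.le] at hpow
    rw [Real.rpow_neg h1w.le, ← div_eq_mul_inv, one_le_div (Real.rpow_pos_of_pos h1w _)]
    exact hpow
  have h4' : (1:ℝ) ≤ ((2*t)^(1+ε))^n * (Y 0)^((1+ε)*(n:ℝ)) *
      ∏ i : Fin n, (1+|Y i.succ.succ|)^(-(1+ε)) := by
    calc (1:ℝ) = ∏ _i : Fin n, (1:ℝ) := by simp
      _ ≤ ∏ i : Fin n, ((2*t)^(1+ε) * (Y 0)^(1+ε) * (1+|Y i.succ.succ|)^(-(1+ε))) :=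
          Finset.prod_le_prod (by intro i _; norm_num) (fun i _ => hterm i)
      _ = ((2*t)^(1+ε))^n * (Y 0)^((1+ε)*(n:ℝ)) * ∏ i : Fin n, (1+|Y i.succ.succ|)^(-(1+ε)) := by
          rw [Finset.prod_mul_distrib, Finset.prod_mul_distrib, Finset.prod_const,
            Finset.prod_const, Finset.card_univ, Fintype.card_fin,
            ← Real.rpow_natCast ((Y 0)^(1+ε)) n, ← Real.rpow_mul hy0.le]
  have hY0comb : (Y 0)^(p₁+(p-((n:ℝ)+2))) * (Y 0)^(-δ) * (Y 0)^((1+ε)*(n:ℝ))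
      = (Y 0)^(p₁+(p-((n:ℝ)+2)) + -δ + (1+ε)*(n:ℝ)) := by
    rw [← Real.rpow_add hy0, ← Real.rpow_add hy0]
  have hY1comb : (Y 1)^(p₂+(p-((n:ℝ)+2))) * (Y 1)^δ = (Y 1)^(p₂+(p-((n:ℝ)+2))+δ) :=
    (Real.rpow_add hy1 _ _).symm
  have hfirstnn : (0:ℝ) ≤ K₀ * (Y 0)^(p₁+(p-((n:ℝ)+2))) * (Y 1)^(p₂+(p-((n:ℝ)+2))) := by
    exact mul_nonneg (mul_nonneg (le_trans zero_le_one hK₀1)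
      (Real.rpow_nonneg hy0.le _)) (Real.rpow_nonneg hy1.le _)
  calc (Y 0)^p₁ * (Y 1)^p₂ * q^p * q^(-((n:ℝ)+2))
      = (Y 0)^p₁ * (Y 1)^p₂ * q^(p - ((n:ℝ)+2)) := by
        rw [mul_assoc, ← Real.rpow_add hq, ← sub_eq_add_neg]
    _ ≤ (Y 0)^p₁ * (Y 1)^p₂ * (K₀ * ((Y 0)^(p-((n:ℝ)+2)) * (Y 1)^(p-((n:ℝ)+2)))) := by
        refine mul_le_mul_of_nonneg_left hqK ?_
        exact mul_nonneg (Real.rpow_nonneg hy0.le _) (Real.rpow_nonneg hy1.le _)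
    _ = K₀ * (Y 0)^(p₁+(p-((n:ℝ)+2))) * (Y 1)^(p₂+(p-((n:ℝ)+2))) := by
        rw [Real.rpow_add hy0, Real.rpow_add hy1]; ring
    _ ≤ K₀ * (Y 0)^(p₁+(p-((n:ℝ)+2))) * (Y 1)^(p₂+(p-((n:ℝ)+2)))
          * ((t^2)^δ * (Y 1)^δ * (Y 0)^(-δ))
          * (((2*t)^(1+ε))^n * (Y 0)^((1+ε)*(n:ℝ)) *
              ∏ i : Fin n, (1+|Y i.succ.succ|)^(-(1+ε))) := by
        refine le_trans (le_mul_of_one_le_right hfirstnn h3') ?_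
        refine le_mul_of_one_le_right ?_ h4'
        refine mul_nonneg hfirstnn ?_
        have h1 := Real.rpow_nonneg (sq_nonneg t) δ
        have h2 := Real.rpow_nonneg hy1.le δ
        have h3 := Real.rpow_nonneg hy0.le (-δ)
        positivity
    _ = (K₀*(t^2)^δ*((2*t)^(1+ε))^n) * (Y 0)^(p₁+(p-((n:ℝ)+2)) + -δ + (1+ε)*(n:ℝ)) *
        ((Y 1)^(p₂+(p-((n:ℝ)+2))+δ) * ∏ i : Fin n, (1+|Y i.succ.succ|)^(-(1+ε))) := by
        rw [← hY0comb, ← hY1comb]; ring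

end Aux

set_option maxHeartbeats 2000000 in
/-- If `p₂ + p < l - 1` and `p₁ + p₂ + 2p < l` (with `l = n + 2 ≥ 2`), then
`∫_{S_t} y₁^{p₁} y₂^{p₂} q(Y)^p q(Y)^{-l} dX dY < ∞`. -/
theorem stmt_11 (n : ℕ) (t : ℝ) (ht : 0 < t) (p₁ p₂ p : ℝ)
    (h1 : p₂ + p < (n : ℝ) + 2 - 1) (h2 : p₁ + p₂ + 2 * p < (n : ℝ) + 2) :
    IntegrableOn
      (fun z : (Fin (n + 2) → ℝ) × (Fin (n + 2) → ℝ) =>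
        (z.2 0) ^ p₁ * (z.2 1) ^ p₂ * (qf n z.2) ^ p * (qf n z.2) ^ (-((n : ℝ) + 2)))
      (SiegelDomain n t) volume := by
  classical
  obtain ⟨δ, ε, hδ0, hε0, hB, hA⟩ := exists_delta_eps n p₁ p₂ p h1 h2
  have ht' : (0:ℝ) < t⁻¹ := inv_pos.2 ht
  obtain ⟨c₀, hc₀def⟩ : ∃ c : ℝ, c = min (1/2) (1/(2*t^4)) := ⟨_, rfl⟩
  have hc₀pos : 0 < c₀ := hc₀def ▸ lt_min (by norm_num) (by positivity)
  obtain ⟨K₀, hK₀def⟩ : ∃ K : ℝ, K = max 1 (c₀ ^ (p - ((n:ℝ)+2))) := ⟨_, rfl⟩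
  -- the dominating coordinate functions
  obtain ⟨g₀, hg₀def⟩ : ∃ g : ℝ → ℝ, g = Set.indicator (Set.Ioi t⁻¹)
      (fun x => (K₀*(t^2)^δ*((2*t)^(1+ε))^n) * x ^ (p₁+(p-((n:ℝ)+2)) + -δ + (1+ε)*(n:ℝ))) :=
    ⟨_, rfl⟩
  obtain ⟨g₁, hg₁def⟩ : ∃ g : ℝ → ℝ, g = Set.indicator (Set.Ioi (t⁻¹^3))
      (fun x => x ^ (p₂+(p-((n:ℝ)+2))+δ)) := ⟨_, rfl⟩
  obtain ⟨gw, hgwdef⟩ : ∃ g : ℝ → ℝ, g = fun x => (1+|x|) ^ (-(1+ε)) := ⟨_, rfl⟩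
  obtain ⟨F, hFdef⟩ : ∃ F : Fin (n+2) → ℝ → ℝ,
      F = fun j => if j = 0 then g₀ else if j = 1 then g₁ else gw := ⟨_, rfl⟩
  have hg₀int : Integrable g₀ volume := by
    rw [hg₀def]
    refine IntegrableOn.integrable_indicator ?_ measurableSet_Ioi
    exact (integrableOn_Ioi_rpow_of_lt hA ht').const_mul _
  have hg₁int : Integrable g₁ volume := by
    rw [hg₁def]
    refine IntegrableOn.integrable_indicator ?_ measurableSet_Ioi
    exact integrableOn_Ioi_rpow_of_lt hB (pow_pos ht' 3)
  have hgwint : Integrable gw volume := by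
    have h := integrable_one_add_norm (E := ℝ) (μ := volume) (r := 1+ε)
      (by simp [Module.finrank_self]; linarith)
    rw [hgwdef]
    simpa [Real.norm_eq_abs] using h
  have hFint : ∀ j : Fin (n+2), Integrable (F j) volume := by
    intro j
    by_cases h0 : j = 0
    · simpa [hFdef, h0] using hg₀int
    by_cases h1' : j = 1
    · simpa [hFdef, h0, h1'] using hg₁int
    · simpa [hFdef, h0, h1'] using hgwint
  have hFprod : Integrable (fun Y : Fin (n+2) → ℝ => ∏ j, F j (Y j)) volume :=
    Integrable.fintype_prod hFint
  have hFval : ∀ Y : Fin (n+2) → ℝ,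
      (∏ j, F j (Y j)) = g₀ (Y 0) * (g₁ (Y 1) * ∏ i : Fin n, gw (Y i.succ.succ)) := by
    intro Y
    rw [Fin.prod_univ_succ, Fin.prod_univ_succ]
    have h1s : ((0 : Fin (n+1)).succ : Fin (n+2)) = 1 := Fin.succ_zero_eq_one
    have e2 : ∀ k : Fin n, (k.succ.succ : Fin (n+2)) ≠ 0 ∧ (k.succ.succ : Fin (n+2)) ≠ 1 := by
      intro k
      refine ⟨Fin.succ_ne_zero _, ?_⟩
      rw [← Fin.succ_zero_eq_one]
      intro h
      exact Fin.succ_ne_zero k (Fin.succ_injective _ h)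
    have h10 : (1 : Fin (n+2)) ≠ 0 := by simp [Fin.ext_iff]
    simp only [hFdef, h1s, if_pos rfl, if_neg h10]
    refine congrArg _ (congrArg _ (Finset.prod_congr rfl fun k _ => ?_))
    rw [if_neg (e2 k).1, if_neg (e2 k).2]
  -- the dominating function on the product space
  have hCBint : Integrable
      (Set.indicator (Metric.closedBall (0 : Fin (n+2) → ℝ) t) fun _ => (1:ℝ)) volume := by
    refine IntegrableOn.integrable_indicator ?_ measurableSet_closedBall
    exact integrableOn_const measure_closedBall_lt_top.ne
  have hG' : Integrable (fun z : (Fin (n+2) → ℝ) × (Fin (n+2) → ℝ) =>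
      (Set.indicator (Metric.closedBall (0 : Fin (n+2) → ℝ) t) fun _ => (1:ℝ)) z.1 *
      ∏ j, F j (z.2 j)) volume := by
    rw [Measure.volume_eq_prod]
    exact hCBint.mul_prod hFprod
  -- measurability of the integrand
  have hfm : Measurable (fun z : (Fin (n + 2) → ℝ) × (Fin (n + 2) → ℝ) =>
      (z.2 0) ^ p₁ * (z.2 1) ^ p₂ * (qf n z.2) ^ p * (qf n z.2) ^ (-((n : ℝ) + 2))) := by
    have hqfm : Measurable (qf n) := by
      have : Continuous (qf n) := by
        unfold qf qD
        exact ((continuous_apply 0).mul (continuous_apply 1)).add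
          (continuous_finset_sum Finset.univ fun (i : Fin n) _ =>
            (continuous_apply i.succ.succ).pow 2).neg
      exact this.measurable
    fun_prop
  -- conclude by domination
  refine Integrable.mono' hG'.integrableOn hfm.aestronglyMeasurable ?_
  rw [ae_restrict_iff' (isOpen_SiegelDomain n t).measurableSet]
  refine Filter.Eventually.of_forall ?_
  rintro ⟨X, Y⟩ ⟨hX, hY1, hY2, hY3⟩
  dsimp only
  -- basic facts about Y
  have hy0 : 0 < Y 0 := lt_trans (by positivity) hY1
  have hq : 0 < qf n Y := by nlinarith [sq_nonneg (Y 0), pow_pos ht 2]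
  have hqDle : qD n Y ≤ 0 := by
    unfold qD
    simp only [neg_nonpos]
    positivity
  have hq_eq : qf n Y = Y 0 * Y 1 + qD n Y := rfl
  have hqle : qf n Y ≤ Y 0 * Y 1 := by linarith
  have hy1 : 0 < Y 1 := by nlinarith
  have h_ty0 : 1 < t * Y 0 := by
    have := (div_lt_iff₀ ht).mp hY1
    nlinarith
  have hy0lt : Y 0 < t ^ 2 * Y 1 := by
    nlinarith [mul_le_mul_of_nonneg_left hqle (le_of_lt (pow_pos ht 2)), hY2, hy0]
  have hy1lb : t⁻¹ ^ 3 < Y 1 := by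
    have h1' : t⁻¹ < Y 0 := by rwa [← one_div]
    have h5 := mul_lt_mul_of_pos_left (lt_trans h1' hy0lt) (mul_pos ht' ht')
    have h6 : t⁻¹ * t⁻¹ * (t ^ 2 * Y 1) = Y 1 := by field_simp
    nlinarith [h5, h6]
  have hqDlb : -(t ^ 2 * (Y 0) ^ 2) < qD n Y := by
    have := neg_abs_le (qD n Y); linarith
  have hc₀q : c₀ * (Y 0 * Y 1) ≤ qf n Y := by
    have hchalf : c₀ ≤ 1/2 := by rw [hc₀def]; exact min_le_left _ _
    have hct : c₀ * (2*t^4) ≤ 1 := by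
      have h : c₀ ≤ 1/(2*t^4) := by rw [hc₀def]; exact min_le_right _ _
      have h2t : (0:ℝ) < 2*t^4 := by positivity
      calc c₀*(2*t^4) ≤ (1/(2*t^4))*(2*t^4) := mul_le_mul_of_nonneg_right h h2t.le
        _ = 1 := by field_simp
    rcases le_or_gt (2*t^2*(Y 0)) (Y 1) with hcase | hcase
    · nlinarith [mul_pos hy0 hy1, mul_le_mul_of_nonneg_left hcase hy0.le, hqDlb,
        mul_nonneg (sub_nonneg.2 hchalf) (mul_pos hy0 hy1).le]
    · nlinarith [hY2, pow_pos ht 2, mul_pos hy0 hy1,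
        mul_lt_mul_of_pos_left hcase (mul_pos hc₀pos hy0),
        mul_le_mul_of_nonneg_right hct (sq_nonneg (Y 0)), hc₀pos.le]
  have hwi : ∀ i : Fin n, |Y i.succ.succ| < t * Y 0 := by
    intro i
    have hwsq : (Y i.succ.succ)^2 < t^2 * (Y 0)^2 :=
      lt_of_le_of_lt ((qD_abs n Y) ▸ Finset.single_le_sum
        (fun j _ => sq_nonneg (Y j.succ.succ)) (Finset.mem_univ i)) hY3
    nlinarith [hwsq, abs_nonneg (Y i.succ.succ), sq_abs (Y i.succ.succ), mul_pos ht hy0]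
  -- X lies in the closed ball
  have hXmem : X ∈ Metric.closedBall (0 : Fin (n+2) → ℝ) t := by
    rw [Metric.mem_closedBall, dist_pi_le_iff ht.le]
    intro j
    rw [Real.dist_eq, Pi.zero_apply, sub_zero]
    have hj : (X j)^2 ≤ (X 0)^2 + (X 1)^2 + |qD n X| := by
      induction j using Fin.cases with
      | zero => nlinarith [abs_nonneg (qD n X), sq_nonneg (X 1)]
      | succ j' =>
        induction j' using Fin.cases with
        | zero =>
          rw [Fin.succ_zero_eq_one]
          nlinarith [abs_nonneg (qD n X), sq_nonneg (X 0)]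
        | succ k =>
          have hk : (X k.succ.succ)^2 ≤ |qD n X| := by
            rw [qD_abs]
            exact Finset.single_le_sum (fun i _ => sq_nonneg (X i.succ.succ)) (Finset.mem_univ k)
          nlinarith [sq_nonneg (X 0), sq_nonneg (X 1)]
    nlinarith [abs_nonneg (X j), sq_abs (X j)]
  -- rewrite the right-hand side
  rw [Set.indicator_of_mem hXmem, one_mul, hFval]
  have hg₀v : g₀ (Y 0) = (K₀*(t^2)^δ*((2*t)^(1+ε))^n) *
      (Y 0) ^ (p₁+(p-((n:ℝ)+2)) + -δ + (1+ε)*(n:ℝ)) := by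
    rw [hg₀def, Set.indicator_of_mem (by simpa [Set.mem_Ioi, one_div] using hY1)]
  have hg₁v : g₁ (Y 1) = (Y 1) ^ (p₂+(p-((n:ℝ)+2))+δ) := by
    rw [hg₁def, Set.indicator_of_mem (Set.mem_Ioi.2 hy1lb)]
  rw [hg₀v, hg₁v]
  -- norm of the integrand
  have hnn : (0:ℝ) ≤ (Y 0) ^ p₁ * (Y 1) ^ p₂ * (qf n Y) ^ p * (qf n Y) ^ (-((n:ℝ)+2)) :=
    mul_nonneg (mul_nonneg (mul_nonneg (Real.rpow_nonneg hy0.le _)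
      (Real.rpow_nonneg hy1.le _)) (Real.rpow_nonneg hq.le _)) (Real.rpow_nonneg hq.le _)
  rw [Real.norm_eq_abs, abs_of_nonneg hnn]
  simp only [hgwdef]
  exact pointwise_est n t ε δ c₀ K₀ p₁ p₂ p Y (qf n Y) ht hy0 hy1 hq hqle hc₀pos hc₀q
    hK₀def hδ0 hε0 h_ty0 hy0lt hwi
end

section
/- Let κ ≥ 2 be an integer, N ≥ 1, and suppose (v_b)_{b ∈ ℤ/Nℤ} are complex numbers such that for every c ∈ (ℤ/Nℤ)^×: ∑_{b ∈ (ℤ/Nℤ)^×} v_b · ζ^{b·c^{-1}}(κ) = 0, where ζ^a(κ) = ∑_{n ≡ a mod N, n ≠ 0} sgn(n)^κ · |n|^{−κ} denotes the partial zeta value summed over all nonzero integers congruent to a mod N (with (−1)^κ weight on negative n). Then v_b + (−1)^κ·v_{−b} = 0 for all b ∈ (ℤ/Nℤ)^×. -/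
open Complex

noncomputable def zetaPart (N : ℕ) (κ : ℕ) (a : ZMod N) : ℂ :=
  ∑' n : ℤ, if n ≠ 0 ∧ (n : ZMod N) = a then
      ((Int.sign n : ℂ)) ^ κ * (((|n| : ℤ) : ℝ) ^ (-(κ : ℝ)) : ℝ)
    else 0

namespace Stmt19

noncomputable def rr (κ n : ℕ) : ℂ := (((n : ℝ) ^ (-(κ : ℝ)) : ℝ) : ℂ)

noncomputable def Pp (N κ : ℕ) (a : ZMod N) : ℂ :=
  ∑' n : ℕ, if (n : ZMod N) = a ∧ n ≠ 0 then rr κ n else 0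

lemma summable_rpow {κ : ℕ} (hκ : 2 ≤ κ) : Summable fun n : ℕ => (n : ℝ) ^ (-(κ : ℝ)) := by
  refine Real.summable_nat_rpow.mpr ?_
  have : (2 : ℝ) ≤ (κ : ℝ) := by exact_mod_cast hκ
  linarith

lemma summable_ite {κ : ℕ} (hκ : 2 ≤ κ) (c : ℕ → Prop) [DecidablePred c] :
    Summable fun n : ℕ => if c n then rr κ n else 0 := by
  refine Summable.of_norm_bounded (summable_rpow hκ) fun n => ?_
  by_cases h : c n
  · simp only [h, if_true, rr, Complex.norm_real, Real.norm_eq_abs]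
    rw [_root_.abs_of_nonneg (Real.rpow_nonneg (Nat.cast_nonneg n) _)]
  · simp [h, Real.rpow_nonneg]

lemma rr_eq {κ : ℕ} (n : ℕ) (hn : n ≠ 0) : rr κ n = ((n : ℂ) ^ (κ : ℂ))⁻¹ := by
  rw [rr, Real.rpow_neg (by positivity), Real.rpow_natCast, cpow_natCast]
  push_cast
  ring


variable (N : ℕ) [NeZero N]

lemma zetaPart_eq {κ : ℕ} (hκ : 2 ≤ κ) (a : ZMod N) :
    zetaPart N κ a = Pp N κ a + (-1 : ℂ) ^ κ * Pp N κ (-a) := by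
  set f : ℤ → ℂ := fun n => if n ≠ 0 ∧ (n : ZMod N) = a then
      ((Int.sign n : ℂ)) ^ κ * (((|n| : ℤ) : ℝ) ^ (-(κ : ℝ)) : ℝ) else 0 with hf
  have hnat : ∀ n : ℕ, f n = if ((n : ZMod N) = a ∧ n ≠ 0) then rr κ n else 0 := by
    intro n
    rcases eq_or_ne n 0 with rfl | hn
    · simp [hf]
    · have h1 : (n : ℤ) ≠ 0 := by exact_mod_cast hn
      have h2 : Int.sign (n : ℤ) = 1 := Int.sign_eq_one_of_pos (by positivity)
      simp only [hf, h1, ne_eq, not_false_eq_true, true_and, Int.cast_natCast, hn, and_true]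
      rw [h2]
      simp [rr]
  have hneg : ∀ n : ℕ, f (-((n : ℤ) + 1)) =
      (-1 : ℂ) ^ κ *
        (if (((n + 1 : ℕ) : ZMod N) = -a ∧ n + 1 ≠ 0) then rr κ (n + 1) else 0) := by
    intro n
    have h0 : (-((n : ℤ) + 1)) ≠ 0 := by omega
    have hsgn : Int.sign (-((n : ℤ) + 1)) = -1 := Int.sign_eq_neg_one_of_neg (by omega)
    have habs : |(-((n : ℤ) + 1))| = (n : ℤ) + 1 := by
      rw [abs_neg]; exact _root_.abs_of_nonneg (by omega)
    have hcond : (((-((n : ℤ) + 1) : ℤ) : ZMod N) = a) ↔ (((n + 1 : ℕ) : ZMod N) = -a) := by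
      push_cast
      exact neg_eq_iff_eq_neg
    simp only [hf, h0, ne_eq, not_false_eq_true, true_and, hcond, hsgn, habs,
      Nat.succ_ne_zero, and_true]
    split_ifs with hcase
    · rw [rr]
      push_cast
      ring
    · exact (mul_zero _).symm
  have hs1 : Summable (fun n : ℕ => f n) := by
    have := summable_ite (κ := κ) hκ (fun n : ℕ => (n : ZMod N) = a ∧ n ≠ 0)
    exact this.congr fun n => (hnat n).symm
  have hs2 : Summable (fun n : ℕ => f (-((n : ℤ) + 1))) := by
    have hg : Summable (fun n : ℕ => if ((n : ZMod N) = -a ∧ n ≠ 0) then rr κ n else 0) :=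
      summable_ite hκ _
    have hg1 : Summable (fun n : ℕ =>
        if (((n + 1 : ℕ) : ZMod N) = -a ∧ n + 1 ≠ 0) then rr κ (n + 1) else 0) :=
      by
        have h2 := (summable_nat_add_iff
          (f := fun n : ℕ => if ((n : ZMod N) = -a ∧ n ≠ 0) then rr κ n else 0) 1).mpr hg
        exact h2
    exact Summable.congr (hg1.mul_left ((-1 : ℂ) ^ κ)) fun n => (hneg n).symm
  have hz : zetaPart N κ a = ∑' n : ℤ, f n := rfl
  rw [hz, tsum_of_nat_of_neg_add_one hs1 hs2]
  congr 1
  · exact tsum_congr hnat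
  · rw [tsum_congr hneg, tsum_mul_left]
    congr 1
    have hg : Summable fun n : ℕ => if ((n : ZMod N) = -a ∧ n ≠ 0) then rr κ n else 0 :=
      summable_ite hκ _
    rw [Pp, Summable.tsum_eq_zero_add hg]
    simp

lemma sum_char_Pp {κ : ℕ} (hκ : 2 ≤ κ) (χ : DirichletCharacter ℂ N) :
    ∑ d : (ZMod N)ˣ, χ (d : ZMod N) * Pp N κ (d : ZMod N)
      = LSeries (fun n => χ (n : ZMod N)) κ := by
  have hsum : ∀ d : (ZMod N)ˣ, Summable fun n : ℕ =>
      χ (d : ZMod N) * (if ((n : ZMod N) = (d : ZMod N) ∧ n ≠ 0) then rr κ n else 0) :=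
    fun d => (summable_ite hκ _).mul_left _
  calc ∑ d : (ZMod N)ˣ, χ (d : ZMod N) * Pp N κ (d : ZMod N)
      = ∑ d : (ZMod N)ˣ, ∑' n : ℕ,
          χ (d : ZMod N) * (if ((n : ZMod N) = (d : ZMod N) ∧ n ≠ 0) then rr κ n else 0) := by
        refine Finset.sum_congr rfl fun d _ => ?_
        rw [Pp, tsum_mul_left]
    _ = ∑' n : ℕ, ∑ d : (ZMod N)ˣ,
          χ (d : ZMod N) * (if ((n : ZMod N) = (d : ZMod N) ∧ n ≠ 0) then rr κ n else 0) :=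
        (Summable.tsum_finsetSum fun d _ => hsum d).symm
    _ = LSeries (fun n => χ (n : ZMod N)) κ := by
        rw [LSeries]
        refine tsum_congr fun n => ?_
        rcases eq_or_ne n 0 with rfl | hn
        · simp [LSeries.term_zero]
        · rw [LSeries.term_of_ne_zero hn]
          by_cases hu : IsUnit ((n : ZMod N))
          · obtain ⟨u, hu⟩ := hu
            rw [Fintype.sum_eq_single u (fun d hd => ?_)]
            · rw [if_pos ⟨hu.symm, hn⟩, hu, rr_eq n hn, div_eq_mul_inv]
            · rw [if_neg, mul_zero]
              rintro ⟨h1, -⟩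
              exact hd (Units.ext (by rw [← h1, ← hu]))
          · have h0 : χ ((n : ℕ) : ZMod N) = 0 := χ.map_nonunit hu
            rw [h0, zero_div]
            refine Finset.sum_eq_zero fun d _ => ?_
            rw [if_neg, mul_zero]
            rintro ⟨h1, -⟩
            exact hu (h1 ▸ d.isUnit)

lemma inv_apply_unit (χ : DirichletCharacter ℂ N) (d : (ZMod N)ˣ) :
    χ ((d⁻¹ : (ZMod N)ˣ) : ZMod N) = χ⁻¹ (d : ZMod N) := by
  have h1 : χ (d : ZMod N) * χ ((d⁻¹ : (ZMod N)ˣ) : ZMod N) = 1 := by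
    rw [← map_mul, ← Units.val_mul, mul_inv_cancel, Units.val_one, map_one]
  rw [MulChar.inv_apply_eq_inv, Ring.inverse_eq_inv']
  exact (inv_eq_of_mul_eq_one_right h1).symm

lemma S_eq {κ : ℕ} (hκ : 2 ≤ κ) (χ : DirichletCharacter ℂ N) :
    ∑ d : (ZMod N)ˣ, χ ((d⁻¹ : (ZMod N)ˣ) : ZMod N) * zetaPart N κ (d : ZMod N)
      = (1 + (-1 : ℂ) ^ κ * χ⁻¹ (-1 : ZMod N)) * LSeries (fun n => χ⁻¹ (n : ZMod N)) κ := by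
  have key : ∀ d : (ZMod N)ˣ, χ ((d⁻¹ : (ZMod N)ˣ) : ZMod N) * zetaPart N κ (d : ZMod N)
      = χ⁻¹ (d : ZMod N) * Pp N κ (d : ZMod N)
        + (-1 : ℂ) ^ κ * (χ⁻¹ (d : ZMod N) * Pp N κ (-(d : ZMod N))) := by
    intro d
    rw [inv_apply_unit, zetaPart_eq N hκ]
    ring
  rw [Finset.sum_congr rfl fun d _ => key d, Finset.sum_add_distrib, ← Finset.mul_sum,
    sum_char_Pp N hκ χ⁻¹]
  have hneg : ∑ d : (ZMod N)ˣ, χ⁻¹ (d : ZMod N) * Pp N κ (-(d : ZMod N))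
      = χ⁻¹ (-1 : ZMod N) * ∑ d : (ZMod N)ˣ, χ⁻¹ (d : ZMod N) * Pp N κ (d : ZMod N) := by
    rw [Finset.mul_sum]
    refine Fintype.sum_equiv (Equiv.neg _) _ _ fun d => ?_
    simp only [Equiv.neg_apply, Units.val_neg]
    have h2 : (-1 : ZMod N) * (-(d : ZMod N)) = (d : ZMod N) := by ring
    rw [← mul_assoc, ← map_mul, h2]
  rw [hneg, sum_char_Pp N hκ χ⁻¹]
  ring

lemma twisted {κ : ℕ} (v : ZMod N → ℂ)
    (h : ∀ c : (ZMod N)ˣ, ∑ b : (ZMod N)ˣ,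
      v b * zetaPart N κ ((b : ZMod N) * ((c⁻¹ : (ZMod N)ˣ) : ZMod N)) = 0)
    (χ : DirichletCharacter ℂ N) :
    (∑ b : (ZMod N)ˣ, χ (b : ZMod N) * v (b : ZMod N)) *
      (∑ d : (ZMod N)ˣ, χ ((d⁻¹ : (ZMod N)ˣ) : ZMod N) * zetaPart N κ (d : ZMod N)) = 0 := by
  have key : ∀ b : (ZMod N)ˣ,
      (χ (b : ZMod N) * v (b : ZMod N)) *
        (∑ d : (ZMod N)ˣ, χ ((d⁻¹ : (ZMod N)ˣ) : ZMod N) * zetaPart N κ (d : ZMod N))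
      = ∑ c : (ZMod N)ˣ, χ (c : ZMod N) *
          (v (b : ZMod N) * zetaPart N κ ((b : ZMod N) * ((c⁻¹ : (ZMod N)ˣ) : ZMod N))) := by
    intro b
    have hinv : Function.Involutive (fun c : (ZMod N)ˣ => b * c⁻¹) := fun c => by
      show b * (b * c⁻¹)⁻¹ = c
      rw [mul_inv_rev, inv_inv, mul_comm c, ← mul_assoc, mul_inv_cancel, one_mul]
    rw [Finset.mul_sum]
    refine Fintype.sum_equiv (hinv.toPerm _) _ _ fun d => ?_
    simp only [Function.Involutive.coe_toPerm]
    have h1 : ((b : ZMod N) * (((b * d⁻¹)⁻¹ : (ZMod N)ˣ) : ZMod N)) = (d : ZMod N) := by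
      rw [← Units.val_mul]
      congr 1
      rw [mul_inv_rev, inv_inv, mul_comm d, ← mul_assoc, mul_inv_cancel, one_mul]
    rw [h1, Units.val_mul, map_mul]
    ring
  calc (∑ b : (ZMod N)ˣ, χ (b : ZMod N) * v (b : ZMod N)) *
        (∑ d : (ZMod N)ˣ, χ ((d⁻¹ : (ZMod N)ˣ) : ZMod N) * zetaPart N κ (d : ZMod N))
      = ∑ b : (ZMod N)ˣ, (χ (b : ZMod N) * v (b : ZMod N)) *
          (∑ d : (ZMod N)ˣ, χ ((d⁻¹ : (ZMod N)ˣ) : ZMod N) * zetaPart N κ (d : ZMod N)) :=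
        Finset.sum_mul _ _ _
    _ = ∑ b : (ZMod N)ˣ, ∑ c : (ZMod N)ˣ, χ (c : ZMod N) *
          (v (b : ZMod N) * zetaPart N κ ((b : ZMod N) * ((c⁻¹ : (ZMod N)ˣ) : ZMod N))) :=
        Finset.sum_congr rfl fun b _ => key b
    _ = ∑ c : (ZMod N)ˣ, ∑ b : (ZMod N)ˣ, χ (c : ZMod N) *
          (v (b : ZMod N) * zetaPart N κ ((b : ZMod N) * ((c⁻¹ : (ZMod N)ˣ) : ZMod N))) :=
        Finset.sum_comm
    _ = 0 := by
        refine Finset.sum_eq_zero fun c _ => ?_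
        rw [← Finset.mul_sum, h c, mul_zero]

end Stmt19


/-- If `κ ≥ 2` and the complex numbers `(v_b)` satisfy
`∑_{b ∈ (ℤ/Nℤ)ˣ} v_b ζ^{b c⁻¹}(κ) = 0` for every `c ∈ (ℤ/Nℤ)ˣ`, then
`v_b + (-1)^κ v_{-b} = 0` for all `b ∈ (ℤ/Nℤ)ˣ`. -/
theorem stmt_19 (N : ℕ) [NeZero N] (κ : ℕ) (hκ : 2 ≤ κ) (v : ZMod N → ℂ)
    (h : ∀ c : (ZMod N)ˣ,
      ∑ b : (ZMod N)ˣ, v b * zetaPart N κ ((b : ZMod N) * ((c⁻¹ : (ZMod N)ˣ) : ZMod N)) = 0) :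
    ∀ b : (ZMod N)ˣ, v b + (-1 : ℂ) ^ κ * v (-(b : ZMod N)) = 0 := by
  intro b₀
  haveI : NeZero ((Monoid.exponent (ZMod N)ˣ : ℕ) : ℂ) :=
    ⟨Nat.cast_ne_zero.mpr Monoid.exponent_ne_zero_of_finite⟩
  have hL : ∀ χ : DirichletCharacter ℂ N, LSeries (fun n => χ⁻¹ (n : ZMod N)) (κ : ℂ) ≠ 0 := by
    intro χ
    refine DirichletCharacter.LSeries_ne_zero_of_one_lt_re χ⁻¹ ?_
    simp only [natCast_re]
    exact_mod_cast Nat.lt_of_lt_of_le Nat.one_lt_two hκ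
  have hpar : ∀ χ : DirichletCharacter ℂ N, χ⁻¹ (-1 : ZMod N) = χ (-1 : ZMod N) := by
    intro χ
    have h1 := Stmt19.inv_apply_unit N χ (-1)
    have h2 : ((-1 : (ZMod N)ˣ)⁻¹) = (-1 : (ZMod N)ˣ) := by simp
    rw [h2] at h1
    simp only [Units.val_neg, Units.val_one] at h1
    exact h1.symm
  have key : ∀ χ : DirichletCharacter ℂ N,
      (1 + (-1 : ℂ) ^ κ * χ (-1 : ZMod N)) *
        (∑ b : (ZMod N)ˣ, χ (b : ZMod N) * v (b : ZMod N)) = 0 := by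
    intro χ
    have h1 := Stmt19.twisted N v h χ
    rw [Stmt19.S_eq N hκ χ] at h1
    rcases mul_eq_zero.mp h1 with hA | hS
    · rw [hA, mul_zero]
    · rcases mul_eq_zero.mp hS with hc | hLz
      · rw [← hpar χ, hc, zero_mul]
      · exact absurd hLz (hL χ)
  have hexp : ∀ χ : DirichletCharacter ℂ N,
      χ ((b₀ : ZMod N)⁻¹) * ((1 + (-1 : ℂ) ^ κ * χ (-1 : ZMod N)) *
          (∑ b : (ZMod N)ˣ, χ (b : ZMod N) * v (b : ZMod N)))
      = (∑ b : (ZMod N)ˣ, (χ ((b₀ : ZMod N)⁻¹) * χ (b : ZMod N)) * v (b : ZMod N))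
        + (-1 : ℂ) ^ κ *
          ∑ b : (ZMod N)ˣ, (χ ((b₀ : ZMod N)⁻¹) * χ (-(b : ZMod N))) * v (b : ZMod N) := by
    intro χ
    have hneg : ∀ b : (ZMod N)ˣ, χ (-(b : ZMod N)) = χ (-1 : ZMod N) * χ (b : ZMod N) := by
      intro b
      rw [← map_mul, neg_one_mul]
    simp only [hneg, Finset.mul_sum, ← Finset.sum_add_distrib]
    exact Finset.sum_congr rfl fun b _ => by ring
  have h0 : ∑ χ : DirichletCharacter ℂ N,
      χ ((b₀ : ZMod N)⁻¹) * ((1 + (-1 : ℂ) ^ κ * χ (-1 : ZMod N)) *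
        (∑ b : (ZMod N)ˣ, χ (b : ZMod N) * v (b : ZMod N))) = 0 :=
    Finset.sum_eq_zero fun χ _ => by rw [key χ, mul_zero]
  rw [Finset.sum_congr rfl fun χ _ => hexp χ, Finset.sum_add_distrib, ← Finset.mul_sum] at h0
  have horth := fun x : ZMod N =>
    DirichletCharacter.sum_char_inv_mul_char_eq ℂ (a := (b₀ : ZMod N)) b₀.isUnit x
  have hswap : ∀ w : (ZMod N)ˣ → ZMod N,
      ∑ χ : DirichletCharacter ℂ N, ∑ b : (ZMod N)ˣ,
          (χ ((b₀ : ZMod N)⁻¹) * χ (w b)) * v (b : ZMod N)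
      = ∑ b : (ZMod N)ˣ,
          (if (b₀ : ZMod N) = w b then (N.totient : ℂ) else 0) * v (b : ZMod N) := by
    intro w
    rw [Finset.sum_comm]
    refine Finset.sum_congr rfl fun b _ => ?_
    rw [← Finset.sum_mul, horth (w b)]
  rw [hswap (fun b => (b : ZMod N)), hswap (fun b => -(b : ZMod N))] at h0
  have hfst : ∑ b : (ZMod N)ˣ,
      (if (b₀ : ZMod N) = (b : ZMod N) then (N.totient : ℂ) else 0) * v (b : ZMod N)
      = (N.totient : ℂ) * v (b₀ : ZMod N) := by
    rw [Fintype.sum_eq_single b₀ fun b hb => ?_]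
    · rw [if_pos rfl]
    · rw [if_neg fun hc => hb (Units.ext hc.symm), zero_mul]
  have hsnd : ∑ b : (ZMod N)ˣ,
      (if (b₀ : ZMod N) = -(b : ZMod N) then (N.totient : ℂ) else 0) * v (b : ZMod N)
      = (N.totient : ℂ) * v (-(b₀ : ZMod N)) := by
    rw [Fintype.sum_eq_single (-b₀) fun b hb => ?_]
    · rw [Units.val_neg, neg_neg, if_pos rfl]
    · refine mul_eq_zero_of_left (if_neg fun hc => hb (Units.ext ?_)) _
      rw [Units.val_neg]
      exact neg_eq_iff_eq_neg.mp hc.symm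
  rw [hfst, hsnd] at h0
  have htot : ((N.totient : ℕ) : ℂ) ≠ 0 :=
    Nat.cast_ne_zero.mpr (Nat.totient_pos.mpr (Nat.pos_of_ne_zero (NeZero.ne N))).ne'
  have hfin : ((N.totient : ℕ) : ℂ) *
      (v (b₀ : ZMod N) + (-1 : ℂ) ^ κ * v (-(b₀ : ZMod N))) = 0 := by
    linear_combination h0
  exact (mul_eq_zero.mp hfin).resolve_left htot
end
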